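/- Truth lemma for the canonical model K of ℜ: for every formula φ ∈ Φ₀ and every world (w,ψ) of K, φ ∈ w if and only if (w,ψ) ⊩ φ. -/

import Mathlib

/-- Formulas of the modal language 𝓛: propositional variables, ⊥, →, and ▷. -/
inductive Formula : Type
  | var : ℕ → Formula
  | bot : Formula
  | imp : Formula → Formula → Formula
  | tri : Formula → Formula → Formula
deriving DecidableEq

namespace Formula

/-- ¬φ := φ → ⊥ -/
def neg (φ : Formula) : Formula := imp φ bot
/-- ⊤ := ¬⊥ -/
def top : Formula := neg bot
/-- φ ∨ ψ := ¬φ → ψ -/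
def disj (φ ψ : Formula) : Formula := imp (neg φ) ψ
/-- φ ∧ ψ := ¬(φ → ¬ψ) -/
def conj (φ ψ : Formula) : Formula := neg (imp φ (neg ψ))

/-- `φ` is a substitution instance of a classical propositional tautology:
it evaluates to `true` under every boolean valuation of formulas that
respects `⊥` and `→` (variables and `▷`-formulas are treated as atoms). -/
def IsPropTaut (φ : Formula) : Prop :=
  ∀ v : Formula → Bool, v bot = false →
    (∀ a b, v (imp a b) = (!(v a) || v b)) → v φ = true

/-- Hilbert-style provability.  `Prv false` is the logic ℜ (axioms: classical
tautologies, A1, A2, A3; rules: Modus Ponens and monotonicity M);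
`Prv true` is the logic ℜ_d, which additionally has axiom A4. -/
inductive Prv : Bool → Formula → Prop
  | taut {d : Bool} {φ} : IsPropTaut φ → Prv d φ
  | a1 {d : Bool} (φ ψ χ) : Prv d (imp (tri φ ψ) (imp (tri χ ψ) (tri (disj φ χ) ψ)))
  | a2 {d : Bool} (φ) : Prv d (tri bot φ)
  | a3 {d : Bool} (φ) : Prv d (tri φ top)
  | a4 (φ ψ χ) : Prv true (imp (tri φ ψ) (imp (tri φ χ) (tri φ (conj ψ χ))))
  | mp {d : Bool} {φ ψ} : Prv d (imp φ ψ) → Prv d φ → Prv d ψ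
  | mono {d : Bool} {φ₁ φ₂ ψ₁ ψ₂} : Prv d (imp φ₁ φ₂) → Prv d (imp ψ₁ ψ₂) →
      Prv d (imp (tri φ₂ ψ₁) (tri φ₁ ψ₂))

/-- `Deriv d Δ φ`: φ is derivable from the hypotheses Δ together with all
theorems of the logic (`Prv d`) using only Modus Ponens. -/
inductive Deriv (d : Bool) (Δ : Set Formula) : Formula → Prop
  | hyp {φ} : φ ∈ Δ → Deriv d Δ φ
  | thm {φ} : Prv d φ → Deriv d Δ φ
  | mp {φ ψ} : Deriv d Δ (imp φ ψ) → Deriv d Δ φ → Deriv d Δ ψ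

/-- Conjunction of a list of formulas (empty conjunction is ⊤). -/
def conjList : List Formula → Formula
  | [] => top
  | φ :: l => conj φ (conjList l)

/-- ⋀Γ : conjunction of all formulas of a finite set Γ (⋀∅ = ⊤). -/
noncomputable def bigConj (Γ : Finset Formula) : Formula := conjList Γ.toList

/-- A set of formulas is consistent if ⊥ is not derivable from it. -/
def Consistent (d : Bool) (Δ : Set Formula) : Prop := ¬ Deriv d Δ bot

/-- The pair (u,v) is w-consistent: w ⊬ ⋀u ▷ ¬⋀v. -/
def WCons (d : Bool) (w : Set Formula) (u v : Finset Formula) : Prop :=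
  ¬ Deriv d w (tri (bigConj u) (neg (bigConj v)))

/-- The operation ∼: ∼(¬φ) = φ, and ∼φ = ¬φ if φ is not a negation. -/
def simNeg : Formula → Formula
  | imp φ bot => φ
  | φ => neg φ

/-- Φ is closed under subformulas. -/
def SubClosed (Φ : Finset Formula) : Prop :=
  (∀ a b, imp a b ∈ Φ → a ∈ Φ ∧ b ∈ Φ) ∧ (∀ a b, tri a b ∈ Φ → a ∈ Φ ∧ b ∈ Φ)

/-- Φ is closed under the operation ∼. -/
def SimClosed (Φ : Finset Formula) : Prop := ∀ φ ∈ Φ, simNeg φ ∈ Φ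

/-- w is a maximal consistent subset of Φ: w ⊆ Φ, w is consistent, and for
every φ ∈ Φ either φ ∈ w or ∼φ ∈ w. -/
def MaxCons (d : Bool) (Φ : Finset Formula) (w : Finset Formula) : Prop :=
  w ⊆ Φ ∧ Consistent d ↑w ∧ ∀ φ ∈ Φ, φ ∈ w ∨ simNeg φ ∈ w

/-- Kripke forcing: `rel w u v` means u →_w v, `val w p` means w ⊩ p. -/
def Forces {W : Type*} (rel : W → W → W → Prop) (val : W → ℕ → Prop) :
    W → Formula → Prop
  | w, var p => val w p
  | _, bot => False
  | w, imp a b => Forces rel val w a → Forces rel val w b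
  | w, tri a b => ∀ u v, rel w u v → Forces rel val u a →
      ∃ v', rel w u v' ∧ Forces rel val v' b

end Formula

/-- A Kripke model: a finite set of worlds, a ternary computability relation,
and a forcing relation between worlds and propositional variables. -/
structure KripkeModel where
  W : Type
  fin : Finite W
  rel : W → W → W → Prop
  val : W → ℕ → Prop

/-- A Kripke model is deterministic if for all worlds w, u there is at most
one v with u →_w v. -/
def KripkeModel.Deterministic (M : KripkeModel) : Prop :=
  ∀ w u v v', M.rel w u v → M.rel w u v' → v = v'

/-- Forcing in a Kripke model. -/
def KripkeModel.Forces (M : KripkeModel) : M.W → Formula → Prop :=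
  Formula.Forces M.rel M.val

/-- The standard enumeration of nondeterministic partial recursive functions:
ζ_w(u) = the set of possible outputs of machine (code) w on input u. -/
def zeta (w u : ℕ) : Set ℕ :=
  {v | ((Denumerable.ofNat Nat.Partrec.Code w).eval (Nat.pair u v)).Dom}

/-- The standard enumeration of deterministic partial recursive functions:
ξ_w(u) = the value of the partial recursive function with code w on input u. -/
def xi (w u : ℕ) : Part ℕ :=
  (Denumerable.ofNat Nat.Partrec.Code w).eval u

namespace Formula

/-- Set semantics for nondeterministic partial recursive functions
(existential reading of ▷). -/
def semN (val : ℕ → Set ℕ) : Formula → Set ℕ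
  | var p => val p
  | bot => ∅
  | imp a b => (Set.univ \ semN val a) ∪ semN val b
  | tri a b => {w | ∀ u ∈ semN val a, zeta w u ≠ ∅ → zeta w u ∩ semN val b ≠ ∅}

/-- Set semantics for deterministic partial recursive functions. -/
def semD (val : ℕ → Set ℕ) : Formula → Set ℕ
  | var p => val p
  | bot => ∅
  | imp a b => (Set.univ \ semD val a) ∪ semD val b
  | tri a b => {w | ∀ u ∈ semD val a, ∀ h : (xi w u).Dom, (xi w u).get h ∈ semD val b}

/-- Universal set semantics for nondeterministic partial recursive functions:
every terminating computation path from φ* ends in ψ*. -/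
def semU (val : ℕ → Set ℕ) : Formula → Set ℕ
  | var p => val p
  | bot => ∅
  | imp a b => (Set.univ \ semU val a) ∪ semU val b
  | tri a b => {w | ∀ u ∈ semU val a, zeta w u ⊆ semU val b}

/-- A canonical injective encoding of formulas as natural numbers. -/
def enc : Formula → ℕ
  | var n => 4 * n
  | bot => 1
  | imp a b => 4 * Nat.pair (enc a) (enc b) + 2
  | tri a b => 4 * Nat.pair (enc a) (enc b) + 3

end Formula

namespace Formula

/-- Worlds of the canonical Kripke model K for ℜ over Φ₀: pairs (w,φ) where w
is a maximal consistent (in ℜ) subset of Φ₀ and φ ∈ Φ₀. -/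
def KWorld (Φ₀ : Finset Formula) : Type :=
  {p : Finset Formula × Formula // MaxCons false Φ₀ p.1 ∧ p.2 ∈ Φ₀}

/-- Computability relation of K: (u,ψ) →_{(w,φ)} (v,χ) iff the pair (u,{ψ})
is w-consistent in ℜ and ψ ∈ v. -/
def Krel (Φ₀ : Finset Formula) :
    KWorld Φ₀ → KWorld Φ₀ → KWorld Φ₀ → Prop :=
  fun W U V => WCons false (↑W.1.1 : Set Formula) U.1.1 {U.1.2} ∧ U.1.2 ∈ V.1.1

/-- Atomic forcing of K: (w,φ) ⊩ p iff p ∈ w. -/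
def Kval (Φ₀ : Finset Formula) : KWorld Φ₀ → ℕ → Prop :=
  fun W n => var n ∈ W.1.1

section TruthAux

variable {d : Bool}

/-! ### Boolean valuation lemmas -/

lemma val_neg {v : Formula → Bool} (h0 : v bot = false)
    (h1 : ∀ a b, v (imp a b) = (!(v a) || v b)) (φ : Formula) :
    v (neg φ) = !(v φ) := by
  simp [Formula.neg, h1, h0]

lemma val_top {v : Formula → Bool} (h0 : v bot = false)
    (h1 : ∀ a b, v (imp a b) = (!(v a) || v b)) :
    v top = true := by
  simp [Formula.top, val_neg h0 h1, h0]

lemma val_disj {v : Formula → Bool} (h0 : v bot = false)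
    (h1 : ∀ a b, v (imp a b) = (!(v a) || v b)) (φ ψ : Formula) :
    v (disj φ ψ) = (v φ || v ψ) := by
  simp [Formula.disj, h1, val_neg h0 h1]

lemma val_conj {v : Formula → Bool} (h0 : v bot = false)
    (h1 : ∀ a b, v (imp a b) = (!(v a) || v b)) (φ ψ : Formula) :
    v (conj φ ψ) = (v φ && v ψ) := by
  simp only [Formula.conj, val_neg h0 h1, h1]
  cases v φ <;> cases v ψ <;> rfl

lemma val_simNeg {v : Formula → Bool} (h0 : v bot = false)
    (h1 : ∀ a b, v (imp a b) = (!(v a) || v b)) (φ : Formula) :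
    v (simNeg φ) = !(v φ) := by
  cases φ with
  | var n => exact val_neg h0 h1 _
  | bot => exact val_neg h0 h1 _
  | tri a b => exact val_neg h0 h1 _
  | imp a b =>
    cases b with
    | bot => show v a = !(v (imp a bot)); rw [h1, h0]; cases v a <;> rfl
    | var n => exact val_neg h0 h1 _
    | imp c e => exact val_neg h0 h1 _
    | tri c e => exact val_neg h0 h1 _

lemma val_conjList {v : Formula → Bool} (h0 : v bot = false)
    (h1 : ∀ a b, v (imp a b) = (!(v a) || v b)) (L : List Formula) :
    v (conjList L) = L.all v := by
  induction L with
  | nil => simpa [conjList] using val_top h0 h1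
  | cons x l ih => simp [conjList, val_conj h0 h1, ih]

/-- Disjunction of a list of formulas (empty disjunction is ⊥). -/
def disjList : List Formula → Formula
  | [] => bot
  | φ :: l => disj φ (disjList l)

lemma val_disjList {v : Formula → Bool} (h0 : v bot = false)
    (h1 : ∀ a b, v (imp a b) = (!(v a) || v b)) (L : List Formula) :
    v (disjList L) = L.any v := by
  induction L with
  | nil => simpa [disjList] using h0
  | cons x l ih => simp [disjList, val_disj h0 h1, ih]

/-! ### Basic provability facts -/

lemma taut_K (φ ψ : Formula) : Prv d (imp φ (imp ψ φ)) := by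
  refine Prv.taut fun v h0 h1 => ?_
  simp only [h1]; cases v φ <;> cases v ψ <;> rfl

lemma taut_S (φ ψ χ : Formula) :
    Prv d (imp (imp φ (imp ψ χ)) (imp (imp φ ψ) (imp φ χ))) := by
  refine Prv.taut fun v h0 h1 => ?_
  simp only [h1]; cases v φ <;> cases v ψ <;> cases v χ <;> rfl

lemma taut_id (φ : Formula) : Prv d (imp φ φ) := by
  refine Prv.taut fun v h0 h1 => ?_
  simp only [h1]; cases v φ <;> rfl

lemma prv_comp {a b c : Formula} (h1 : Prv d (imp a b)) (h2 : Prv d (imp b c)) :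
    Prv d (imp a c) := by
  have t : Prv d (imp (imp a b) (imp (imp b c) (imp a c))) := by
    refine Prv.taut fun v h0 hi => ?_
    simp only [hi]; cases v a <;> cases v b <;> cases v c <;> rfl
  exact Prv.mp (Prv.mp t h1) h2

lemma prv_conj_left (a b : Formula) : Prv d (imp (conj a b) a) := by
  refine Prv.taut fun v h0 h1 => ?_
  simp only [h1, val_conj h0 h1]; cases v a <;> cases v b <;> rfl

lemma prv_conj_right (a b : Formula) : Prv d (imp (conj a b) b) := by
  refine Prv.taut fun v h0 h1 => ?_
  simp only [h1, val_conj h0 h1]; cases v a <;> cases v b <;> rfl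

lemma prv_conjList_mem {x : Formula} {L : List Formula} (h : x ∈ L) :
    Prv d (imp (conjList L) x) := by
  induction L with
  | nil => cases h
  | cons y l ih =>
    rcases List.mem_cons.1 h with rfl | h
    · exact prv_conj_left _ _
    · exact prv_comp (prv_conj_right _ _) (ih h)

lemma prv_bigConj_mem {x : Formula} {s : Finset Formula} (h : x ∈ s) :
    Prv d (imp (bigConj s) x) :=
  prv_conjList_mem (Finset.mem_toList.2 h)

/-! ### Deduction theorem and derivability -/

lemma Deriv.weaken {Δ Δ' : Set Formula} {φ : Formula} (h : Deriv d Δ φ)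
    (hs : Δ ⊆ Δ') : Deriv d Δ' φ := by
  induction h with
  | hyp h => exact Deriv.hyp (hs h)
  | thm h => exact Deriv.thm h
  | mp _ _ ih1 ih2 => exact Deriv.mp ih1 ih2

lemma deduction {Δ : Set Formula} {φ ψ : Formula}
    (h : Deriv d (insert φ Δ) ψ) : Deriv d Δ (imp φ ψ) := by
  induction h with
  | hyp h =>
    rcases h with rfl | h
    · exact Deriv.thm (taut_id _)
    · exact Deriv.mp (Deriv.thm (taut_K _ _)) (Deriv.hyp h)
  | thm h => exact Deriv.mp (Deriv.thm (taut_K _ _)) (Deriv.thm h)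
  | mp _ _ ih1 ih2 => exact Deriv.mp (Deriv.mp (Deriv.thm (taut_S _ _ _)) ih1) ih2

lemma deriv_empty {φ : Formula} (h : Deriv d ∅ φ) : Prv d φ := by
  induction h with
  | hyp h => cases h
  | thm h => exact h
  | mp _ _ ih1 ih2 => exact Prv.mp ih1 ih2

lemma deriv_subset_prv {Δ : Set Formula} {φ : Formula} (h : Deriv d Δ φ) :
    ∀ s : Finset Formula, Δ ⊆ ↑s → Prv d (imp (bigConj s) φ) := by
  induction h with
  | hyp h => exact fun s hs => prv_bigConj_mem (hs h)
  | thm h => exact fun s _ => Prv.mp (taut_K _ _) h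
  | mp _ _ ih1 ih2 =>
    exact fun s hs => Prv.mp (Prv.mp (taut_S _ _ _) (ih1 s hs)) (ih2 s hs)

/-! ### simNeg facts -/

lemma taut_pair_bot (φ : Formula) : Prv d (imp φ (imp (simNeg φ) bot)) := by
  refine Prv.taut fun v h0 h1 => ?_
  simp only [h1, val_simNeg h0 h1, h0]; cases v φ <;> rfl

lemma simNeg_to_neg (φ : Formula) : Prv d (imp (simNeg φ) (neg φ)) := by
  refine Prv.taut fun v h0 h1 => ?_
  simp only [Formula.neg, h1, val_simNeg h0 h1, h0]; cases v φ <;> rfl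

lemma maxCons_bot {Φ₀ w : Finset Formula} (hw : MaxCons d Φ₀ w)
    (h : Deriv d ↑w bot) : False := hw.2.1 h

lemma maxCons_mem_of_deriv {Φ₀ w : Finset Formula} {φ : Formula}
    (hw : MaxCons d Φ₀ w) (hφ : φ ∈ Φ₀) (h : Deriv d ↑w φ) : φ ∈ w := by
  by_contra hn
  have hs : simNeg φ ∈ w := (hw.2.2 φ hφ).resolve_left hn
  exact hw.2.1 (Deriv.mp (Deriv.mp (Deriv.thm (taut_pair_bot φ)) h) (Deriv.hyp hs))

lemma maxCons_not_both {Φ₀ w : Finset Formula} {φ : Formula}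
    (hw : MaxCons d Φ₀ w) (h1 : φ ∈ w) (h2 : simNeg φ ∈ w) : False :=
  hw.2.1 (Deriv.mp (Deriv.mp (Deriv.thm (taut_pair_bot φ)) (Deriv.hyp h1)) (Deriv.hyp h2))

/-! ### Lindenbaum -/

lemma lind_aux {Φ₀ : Finset Formula} (hsim : SimClosed Φ₀) :
    ∀ L : List Formula, (∀ x ∈ L, x ∈ Φ₀) →
    ∀ s : Finset Formula, s ⊆ Φ₀ → Consistent d ↑s →
    ∃ t : Finset Formula, s ⊆ t ∧ t ⊆ Φ₀ ∧ Consistent d ↑t ∧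
      ∀ φ ∈ L, φ ∈ t ∨ simNeg φ ∈ t := by
  intro L
  induction L with
  | nil => exact fun _ s hs hc => ⟨s, subset_rfl, hs, hc, by simp⟩
  | cons φ l ih =>
    intro hL s hs hc
    have hφ : φ ∈ Φ₀ := hL φ List.mem_cons_self
    have hl : ∀ x ∈ l, x ∈ Φ₀ := fun x hx => hL x (List.mem_cons_of_mem _ hx)
    by_cases hcφ : Consistent d ↑(insert φ s)
    · obtain ⟨t, h1, h2, h3, h4⟩ := ih hl (insert φ s) (Finset.insert_subset hφ hs) hcφ
      refine ⟨t, subset_trans (Finset.subset_insert _ _) h1, h2, h3, fun x hx => ?_⟩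
      rcases List.mem_cons.1 hx with rfl | hx
      · exact Or.inl (h1 (Finset.mem_insert_self _ _))
      · exact h4 x hx
    · have hcs : Consistent d ↑(insert (simNeg φ) s) := by
        intro hder
        apply hc
        have h1 : Deriv d ↑s (imp φ bot) := by
          have := not_not.1 hcφ
          rw [Finset.coe_insert] at this
          exact deduction this
        have h2 : Deriv d ↑s (imp (simNeg φ) bot) := by
          rw [Finset.coe_insert] at hder
          exact deduction hder
        have t : Prv d (imp (imp φ bot) (imp (imp (simNeg φ) bot) bot)) := by
          refine Prv.taut fun v h0 h1 => ?_
          simp only [h1, h0, val_simNeg h0 h1]; cases v φ <;> rfl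
        exact Deriv.mp (Deriv.mp (Deriv.thm t) h1) h2
      obtain ⟨t, h1, h2, h3, h4⟩ := ih hl (insert (simNeg φ) s)
        (Finset.insert_subset (hsim φ hφ) hs) hcs
      refine ⟨t, subset_trans (Finset.subset_insert _ _) h1, h2, h3, fun x hx => ?_⟩
      rcases List.mem_cons.1 hx with rfl | hx
      · exact Or.inr (h1 (Finset.mem_insert_self _ _))
      · exact h4 x hx

lemma lindenbaum {Φ₀ : Finset Formula} (hsim : SimClosed Φ₀)
    {s : Finset Formula} (hs : s ⊆ Φ₀) (hc : Consistent d ↑s) :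
    ∃ t : Finset Formula, s ⊆ t ∧ MaxCons d Φ₀ t := by
  obtain ⟨t, h1, h2, h3, h4⟩ :=
    lind_aux hsim Φ₀.toList (fun x hx => Finset.mem_toList.1 hx) s hs hc
  exact ⟨t, h1, h2, h3, fun φ hφ => h4 φ (Finset.mem_toList.2 hφ)⟩

/-! ### Disjunction list with ▷ -/

lemma deriv_disjList_tri {Δ : Set Formula} {T : Formula} {L : List Formula}
    (h : ∀ x ∈ L, Deriv d Δ (tri x T)) : Deriv d Δ (tri (disjList L) T) := by
  induction L with
  | nil => exact Deriv.thm (Prv.a2 T)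
  | cons x l ih =>
    exact Deriv.mp (Deriv.mp (Deriv.thm (Prv.a1 x T (disjList l)))
      (h x List.mem_cons_self)) (ih fun y hy => h y (List.mem_cons_of_mem _ hy))

/-! ### The covering tautology -/

lemma taut_disj_cover {Φ₀ : Finset Formula} (hsim : SimClosed Φ₀)
    {a : Formula} (ha : a ∈ Φ₀) :
    IsPropTaut (imp a (disjList (((Φ₀.powerset.filter
      (fun u => a ∈ u ∧ ∀ φ ∈ Φ₀, φ ∈ u ∨ simNeg φ ∈ u)).toList).map bigConj))) := by
  intro v h0 h1
  rw [h1, val_disjList h0 h1]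
  cases hva : v a with
  | false => rfl
  | true =>
    suffices hD : ∃ x ∈ ((Φ₀.powerset.filter
        (fun u => a ∈ u ∧ ∀ φ ∈ Φ₀, φ ∈ u ∨ simNeg φ ∈ u)).toList).map bigConj,
        v x = true by
      rw [List.any_eq_true.2 hD]; rfl
    set uv : Finset Formula :=
      Φ₀.filter (fun χ => v χ = true) ∪ (Φ₀.filter (fun χ => v χ = false)).image simNeg
      with huv
    refine ⟨bigConj uv, List.mem_map.2 ⟨uv, Finset.mem_toList.2 ?_, rfl⟩, ?_⟩
    · rw [Finset.mem_filter, Finset.mem_powerset]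
      refine ⟨?_, ?_, fun φ hφ => ?_⟩
      · intro x hx
        rcases Finset.mem_union.1 hx with hx | hx
        · exact (Finset.mem_filter.1 hx).1
        · obtain ⟨χ, hχ, rfl⟩ := Finset.mem_image.1 hx
          exact hsim χ (Finset.mem_filter.1 hχ).1
      · exact Finset.mem_union_left _ (Finset.mem_filter.2 ⟨ha, hva⟩)
      · cases hvφ : v φ with
        | true => exact Or.inl (Finset.mem_union_left _ (Finset.mem_filter.2 ⟨hφ, hvφ⟩))
        | false => exact Or.inr (Finset.mem_union_right _
            (Finset.mem_image.2 ⟨φ, Finset.mem_filter.2 ⟨hφ, hvφ⟩, rfl⟩))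
    · rw [bigConj, val_conjList h0 h1, List.all_eq_true]
      intro x hx
      rcases Finset.mem_union.1 (Finset.mem_toList.1 hx) with hx | hx
      · exact (Finset.mem_filter.1 hx).2
      · obtain ⟨χ, hχ, rfl⟩ := Finset.mem_image.1 hx
        rw [val_simNeg h0 h1, (Finset.mem_filter.1 hχ).2]; rfl

lemma bigConj_singleton (θ : Formula) : bigConj {θ} = conj θ top := by
  simp [bigConj, conjList]

end TruthAux
/-- Truth lemma for the canonical model K of ℜ: for every φ ∈ Φ₀ and every
world (w,ψ) of K, φ ∈ w iff (w,ψ) ⊩ φ. -/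
theorem truth_lemma_K (Φ₀ : Finset Formula)
    (hsub : SubClosed Φ₀) (hsim : SimClosed Φ₀)
    (φ : Formula) (hφ : φ ∈ Φ₀) (W : KWorld Φ₀) :
    φ ∈ W.1.1 ↔ Forces (Krel Φ₀) (Kval Φ₀) W φ := by
  induction φ generalizing W with
  | var p => exact Iff.rfl
  | bot =>
    constructor
    · intro h; exact W.2.1.2.1 (Deriv.hyp h)
    · intro h; exact h.elim
  | imp a b iha ihb =>
    obtain ⟨ha, hb⟩ := hsub.1 a b hφ
    have hw := W.2.1
    have hfa : Forces (Krel Φ₀) (Kval Φ₀) W (imp a b) ↔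
        (Forces (Krel Φ₀) (Kval Φ₀) W a → Forces (Krel Φ₀) (Kval Φ₀) W b) := Iff.rfl
    rw [hfa, ← iha ha W, ← ihb hb W]
    constructor
    · intro h haw
      exact maxCons_mem_of_deriv hw hb (Deriv.mp (Deriv.hyp h) (Deriv.hyp haw))
    · intro h
      by_contra him
      have hs : simNeg (imp a b) ∈ W.1.1 := (hw.2.2 _ hφ).resolve_left him
      have hneg : Deriv false ↑W.1.1 (neg (imp a b)) :=
        Deriv.mp (Deriv.thm (simNeg_to_neg _)) (Deriv.hyp hs)
      have tautA : Prv false (imp (neg (imp a b)) a) := by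
        refine Prv.taut fun v h0 h1 => ?_
        simp only [Formula.neg, h1, h0]
        cases v a <;> cases v b <;> rfl
      have tautB : Prv false (imp (neg (imp a b)) (imp b bot)) := by
        refine Prv.taut fun v h0 h1 => ?_
        simp only [Formula.neg, h1, h0]
        cases v a <;> cases v b <;> rfl
      have haw : a ∈ W.1.1 :=
        maxCons_mem_of_deriv hw ha (Deriv.mp (Deriv.thm tautA) hneg)
      have hbw : b ∈ W.1.1 := h haw
      exact hw.2.1 (Deriv.mp (Deriv.mp (Deriv.thm tautB) hneg) (Deriv.hyp hbw))
  | tri a b iha ihb =>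
    obtain ⟨ha, hb⟩ := hsub.2 a b hφ
    have hb' : simNeg b ∈ Φ₀ := hsim b hb
    have hw := W.2.1
    constructor
    · -- mem → Forces
      intro h U V hrel hUa
      have hau : a ∈ U.1.1 := (iha ha U).2 hUa
      have hθ : U.1.2 ∈ Φ₀ := U.2.2
      have hcons : Consistent false ↑(insert U.1.2 ({b} : Finset Formula)) := by
        intro hder
        rw [Finset.coe_insert, Finset.coe_singleton] at hder
        have h1 : Deriv false {b} (imp U.1.2 bot) := deduction hder
        rw [Set.singleton_def] at h1
        have h3 : Prv false (imp b (imp U.1.2 bot)) := deriv_empty (deduction h1)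
        have h4 : Prv false (imp b (neg (bigConj {U.1.2}))) := by
          rw [bigConj_singleton]
          refine Prv.mp ?_ h3
          refine Prv.taut fun v h0 hi => ?_
          simp only [Formula.neg, hi, h0, val_conj h0 hi, val_top h0 hi]
          cases v b <;> cases v U.1.2 <;> rfl
        have h5 : Prv false (imp (bigConj U.1.1) a) := prv_bigConj_mem hau
        exact hrel.1 (Deriv.mp (Deriv.thm (Prv.mono h5 h4)) (Deriv.hyp h))
      obtain ⟨t, hst, htm⟩ := lindenbaum hsim
        (Finset.insert_subset hθ (Finset.singleton_subset_iff.2 hb)) hcons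
      refine ⟨⟨(t, b), htm, hb⟩, ⟨hrel.1, hst (Finset.mem_insert_self _ _)⟩, ?_⟩
      exact (ihb hb ⟨(t, b), htm, hb⟩).1
        (hst (Finset.mem_insert_of_mem (Finset.mem_singleton_self b)))
    · -- Forces → mem
      intro hF
      by_contra hmem
      have hsn : simNeg (tri a b) ∈ W.1.1 := (hw.2.2 _ hφ).resolve_left hmem
      have hnw : Deriv false ↑W.1.1 (neg (tri a b)) :=
        Deriv.mp (Deriv.thm (simNeg_to_neg _)) (Deriv.hyp hsn)
      have hnotder : ¬ Deriv false ↑W.1.1 (tri a b) := fun hd =>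
        hw.2.1 (Deriv.mp hnw hd)
      have hconsb : Consistent false ↑({simNeg b} : Finset Formula) := by
        intro hder
        apply hnotder
        have h1 : Prv false (imp (bigConj {simNeg b}) bot) :=
          deriv_subset_prv hder _ subset_rfl
        have hpb : Prv false b := by
          refine Prv.mp ?_ h1
          rw [bigConj_singleton]
          refine Prv.taut fun v h0 hi => ?_
          simp only [Formula.neg, hi, h0, val_conj h0 hi, val_top h0 hi,
            val_simNeg h0 hi]
          cases v b <;> rfl
        have h2 : Prv false (imp top b) := Prv.mp (taut_K b top) hpb
        exact Deriv.thm (Prv.mp (Prv.mono (taut_id a) h2) (Prv.a3 a))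
      obtain ⟨tv, hstv, htvm⟩ :=
        lindenbaum hsim (Finset.singleton_subset_iff.2 hb') hconsb
      have hu : ∃ u : Finset Formula, MaxCons false Φ₀ u ∧ a ∈ u ∧
          WCons false ↑W.1.1 u {simNeg b} := by
        by_contra hno
        push_neg at hno
        apply hnotder
        set T := neg (bigConj ({simNeg b} : Finset Formula)) with hT
        set L := ((Φ₀.powerset.filter
          (fun u => a ∈ u ∧ ∀ φ ∈ Φ₀, φ ∈ u ∨ simNeg φ ∈ u)).toList).map bigConj with hL
        have hall : ∀ x ∈ L, Deriv false ↑W.1.1 (tri x T) := by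
          intro x hx
          obtain ⟨u, hu1, rfl⟩ := List.mem_map.1 hx
          rw [Finset.mem_toList, Finset.mem_filter, Finset.mem_powerset] at hu1
          obtain ⟨hsub', hau, hdec⟩ := hu1
          by_cases hcu : Consistent false ↑u
          · exact Classical.byContradiction (hno u ⟨hsub', hcu, hdec⟩ hau)
          · have h1 : Prv false (imp (bigConj u) bot) :=
              deriv_subset_prv (not_not.1 hcu) _ subset_rfl
            exact Deriv.thm (Prv.mp (Prv.mono h1 (taut_id T)) (Prv.a2 T))
        have hdisj : Deriv false ↑W.1.1 (tri (disjList L) T) := deriv_disjList_tri hall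
        have hcov : Prv false (imp a (disjList L)) := Prv.taut (taut_disj_cover hsim ha)
        have hTb : Prv false (imp T b) := by
          rw [hT, bigConj_singleton]
          refine Prv.taut fun v h0 hi => ?_
          simp only [Formula.neg, hi, h0, val_conj h0 hi, val_top h0 hi,
            val_simNeg h0 hi]
          cases v b <;> rfl
        exact Deriv.mp (Deriv.thm (Prv.mono hcov hTb)) hdisj
      obtain ⟨u, hum, hau, hwc⟩ := hu
      have hU2 : simNeg b ∈ Φ₀ := hb'
      obtain ⟨V', hrel', hFb⟩ := hF ⟨(u, simNeg b), hum, hU2⟩ ⟨(tv, b), htvm, hb⟩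
        ⟨hwc, hstv (Finset.mem_singleton_self _)⟩
        ((iha ha ⟨(u, simNeg b), hum, hU2⟩).1 hau)
      exact maxCons_not_both V'.2.1 ((ihb hb V').2 hFb) hrel'.2

end Formula
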